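/- Let d ≥ 1, N ≥ 1, m ∈ ℕ, and let X = (X_{αβ}) and Y = (Y_{αβ}), α, β ∈ ℤ^d, be families of N×N complex matrices such that ‖X_{αβ}‖ ≤ C_X (1+|α−β|)^{−(m+d+1)} and ‖Y_{αβ}‖ ≤ C_Y (1+|α−β|)^{−(m+d+1)} for all α, β, with finite constants C_X, C_Y. Then for all α, β the series Z_{αβ} := Σ_{γ∈ℤ^d} X_{αγ} Y_{γβ} converges absolutely, and there is a constant K < ∞ depending only on m and d (for instance K = 2^m Σ_{γ∈ℤ^d} (1+|γ|)^{−(d+1)}) such that ‖Z_{αβ}‖ ≤ K C_X C_Y (1+|α−β|)^{−m} for all α, β ∈ ℤ^d. -/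

import Mathlib

/-- A lattice point of `ℤ^d`, viewed as a vector in `ℝ^d`. -/
noncomputable def latticeEmbed {d : ℕ} (γ : Fin d → ℤ) : EuclideanSpace ℝ (Fin d) :=
  WithLp.toLp 2 (fun i => (γ i : ℝ))

/-- The operator norm of an `N × N` complex matrix, via its action on `ℂ^N`. -/
noncomputable def mnorm {N : ℕ} (M : Matrix (Fin N) (Fin N) ℂ) : ℝ :=
  ‖Matrix.toEuclideanCLM (𝕜 := ℂ) (n := Fin N) M‖

lemma mnorm_nonneg {N : ℕ} (M : Matrix (Fin N) (Fin N) ℂ) : 0 ≤ mnorm M := norm_nonneg _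

lemma mnorm_mul_le {N : ℕ} (A B : Matrix (Fin N) (Fin N) ℂ) :
    mnorm (A * B) ≤ mnorm A * mnorm B := by
  unfold mnorm; rw [map_mul]; exact norm_mul_le _ _

lemma mnorm_tsum_le {ι : Type*} {N : ℕ} (f : ι → Matrix (Fin N) (Fin N) ℂ)
    (h : Summable fun n => mnorm (f n)) : mnorm (∑' n, f n) ≤ ∑' n, mnorm (f n) := by
  open scoped Matrix.Norms.L2Operator in
  have h' : Summable fun n => ‖f n‖ := h
  exact norm_tsum_le_tsum_norm h'

lemma coord_abs_le {d : ℕ} (x : EuclideanSpace ℝ (Fin d)) (i : Fin d) : |x i| ≤ ‖x‖ := by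
  rw [EuclideanSpace.norm_eq, ← Real.sqrt_sq_eq_abs]
  apply Real.sqrt_le_sqrt
  have : |x i| ^ 2 ≤ ∑ j, ‖x j‖ ^ 2 := by
    rw [← Real.norm_eq_abs]
    exact Finset.single_le_sum (fun j _ => sq_nonneg ‖x j‖) (Finset.mem_univ i)
  simpa [sq_abs] using this

lemma peetre {E : Type*} [SeminormedAddCommGroup E] (a b c : E) :
    1 + ‖a - b‖ ≤ (1 + ‖a - c‖) * (1 + ‖c - b‖) := by
  have h := norm_sub_le_norm_sub_add_norm_sub a c b
  nlinarith [norm_nonneg (a - c), norm_nonneg (c - b)]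

lemma summable_g {p : ℝ} (hp : 1 < p) :
    Summable (fun n : ℤ => ((1 + |(n : ℝ)|) ^ p)⁻¹) := by
  apply Summable.of_norm_bounded_eventually (g := fun n : ℤ => |(n : ℝ)| ^ (-p))
    (Real.summable_abs_int_rpow hp)
  have hsub : {n : ℤ | ¬ ‖((1 + |(n : ℝ)|) ^ p)⁻¹‖ ≤ |(n : ℝ)| ^ (-p)} ⊆ {0} := by
    intro n hn
    simp only [Set.mem_setOf_eq, Set.mem_singleton_iff] at hn ⊢
    by_contra h0
    apply hn
    have h1 : (1 : ℝ) ≤ |(n : ℝ)| := by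
      rw [← Int.cast_abs]
      exact_mod_cast Int.one_le_abs (by exact_mod_cast h0)
    have hpos : (0 : ℝ) < |(n : ℝ)| := by linarith
    rw [Real.rpow_neg (abs_nonneg _), Real.norm_eq_abs, abs_of_nonneg (by positivity)]
    apply inv_anti₀ (Real.rpow_pos_of_pos hpos p)
    exact Real.rpow_le_rpow (abs_nonneg _) (by linarith) (by linarith)
  exact Filter.eventually_cofinite.mpr (Set.Finite.subset (Set.finite_singleton 0) hsub)

lemma summable_pi_prod {f : ℤ → ℝ} (hf0 : ∀ n, 0 ≤ f n) (hf : Summable f) :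
    ∀ d : ℕ, Summable (fun γ : Fin d → ℤ => ∏ i, f (γ i))
  | 0 => by simpa using summable_of_finite_support (Set.toFinite _)
  | (n + 1) => by
    have ih := summable_pi_prod hf0 hf n
    have h := hf.mul_of_nonneg ih hf0 (fun γ => Finset.prod_nonneg fun i _ => hf0 _)
    have := ((Fin.consEquiv (fun _ : Fin (n + 1) => ℤ)).summable_iff
      (f := fun γ : Fin (n + 1) → ℤ => ∏ i, f (γ i))).mp ?_
    · exact this
    · apply h.congr
      intro x
      simp [Fin.consEquiv, Fin.prod_univ_succ]

lemma key_bound (d : ℕ) (hd : 1 ≤ d) (m : ℕ) (α β γ : Fin d → ℤ) :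
    ((1 + ‖latticeEmbed α - latticeEmbed γ‖) ^ (m + d + 1))⁻¹ *
      ((1 + ‖latticeEmbed γ - latticeEmbed β‖) ^ (m + d + 1))⁻¹ ≤
    ((1 + ‖latticeEmbed α - latticeEmbed β‖) ^ m)⁻¹ *
      ∏ i, ((1 + |(((α - γ) i : ℤ) : ℝ)|) ^ (((d : ℝ) + 1) / d))⁻¹ := by
  have hd0 : (0 : ℝ) < d := by exact_mod_cast hd
  set p : ℝ := ((d : ℝ) + 1) / d with hp_def
  have hp0 : 0 ≤ p := by positivity
  set A : ℝ := 1 + ‖latticeEmbed α - latticeEmbed γ‖ with hA_def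
  set B : ℝ := 1 + ‖latticeEmbed γ - latticeEmbed β‖ with hB_def
  set C : ℝ := 1 + ‖latticeEmbed α - latticeEmbed β‖ with hC_def
  have hA : 1 ≤ A := by simp [hA_def, norm_nonneg]
  have hB : 1 ≤ B := by simp [hB_def, norm_nonneg]
  have hC : 1 ≤ C := by simp [hC_def, norm_nonneg]
  have hA0 : 0 < A := by linarith
  have hB0 : 0 < B := by linarith
  have hC0 : 0 < C := by linarith
  -- rewrite the product of inverses
  rw [Finset.prod_inv_distrib]
  set P : ℝ := ∏ i, (1 + |(((α - γ) i : ℤ) : ℝ)|) ^ p with hP_def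
  have hP0 : 0 < P := Finset.prod_pos fun i _ => Real.rpow_pos_of_pos (by positivity) _
  rw [← mul_inv, ← mul_inv]
  apply inv_anti₀ (by positivity)
  -- main inequality : C^m * P ≤ A^(m+d+1) * B^(m+d+1)
  have hCm : C ^ m ≤ A ^ m * B ^ m := by
    rw [← mul_pow]
    exact pow_le_pow_left₀ (by positivity) (peetre _ _ _) m
  have hcoord : ∀ i, 1 + |(((α - γ) i : ℤ) : ℝ)| ≤ A := by
    intro i
    have h := coord_abs_le (latticeEmbed α - latticeEmbed γ) i
    have hx : (latticeEmbed α - latticeEmbed γ) i = (((α - γ) i : ℤ) : ℝ) := by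
      simp [latticeEmbed]
    rw [hx] at h
    linarith
  have hprod : ∏ i, (1 + |(((α - γ) i : ℤ) : ℝ)|) ≤ A ^ d := by
    calc ∏ i, (1 + |(((α - γ) i : ℤ) : ℝ)|) ≤ ∏ _i : Fin d, A :=
          Finset.prod_le_prod (fun i _ => by positivity) (fun i _ => hcoord i)
      _ = A ^ d := by simp
  have hP : P ≤ A ^ (d + 1) := by
    have h1 : P = (∏ i, (1 + |(((α - γ) i : ℤ) : ℝ)|)) ^ p := by
      rw [hP_def, ← Real.finset_prod_rpow _ _ (fun i _ => by positivity)]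
    have h2 : (∏ i, (1 + |(((α - γ) i : ℤ) : ℝ)|)) ^ p ≤ (A ^ d) ^ p :=
      Real.rpow_le_rpow (Finset.prod_nonneg fun i _ => by positivity) hprod hp0
    have h3 : (A ^ d) ^ p = A ^ (d + 1 : ℕ) := by
      rw [← Real.rpow_natCast A d, ← Real.rpow_mul hA0.le, ← Real.rpow_natCast A (d + 1)]
      congr 1
      rw [hp_def]
      push_cast
      field_simp
    rw [h1]
    rw [h3] at h2
    exact h2
  calc C ^ m * P ≤ (A ^ m * B ^ m) * A ^ (d + 1) :=
        mul_le_mul hCm hP hP0.le (by positivity)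
    _ = A ^ (m + d + 1) * B ^ m := by ring
    _ ≤ A ^ (m + d + 1) * B ^ (m + d + 1) := by
        have : B ^ m ≤ B ^ (m + d + 1) := pow_le_pow_right₀ hB (by omega)
        exact mul_le_mul_of_nonneg_left this (by positivity)

lemma main_aux (d : ℕ) (m : ℕ) (N : ℕ) (F : (Fin d → ℤ) → ℝ) (hF : Summable F)
    (X Y : (Fin d → ℤ) → (Fin d → ℤ) → Matrix (Fin N) (Fin N) ℂ) (CX CY : ℝ)
    (hCX : 0 ≤ CX) (hCY : 0 ≤ CY)
    (hX : ∀ α β, mnorm (X α β) ≤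
      CX * ((1 + ‖latticeEmbed α - latticeEmbed β‖) ^ (m + d + 1))⁻¹)
    (hY : ∀ α β, mnorm (Y α β) ≤
      CY * ((1 + ‖latticeEmbed α - latticeEmbed β‖) ^ (m + d + 1))⁻¹)
    (hFb : ∀ α β γ : Fin d → ℤ,
      ((1 + ‖latticeEmbed α - latticeEmbed γ‖) ^ (m + d + 1))⁻¹ *
        ((1 + ‖latticeEmbed γ - latticeEmbed β‖) ^ (m + d + 1))⁻¹ ≤
      ((1 + ‖latticeEmbed α - latticeEmbed β‖) ^ m)⁻¹ * F (α - γ))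
    (α β : Fin d → ℤ) :
    Summable (fun γ : Fin d → ℤ => mnorm (X α γ * Y γ β)) ∧
    mnorm (∑' γ : Fin d → ℤ, X α γ * Y γ β) ≤
      (∑' γ, F γ) * CX * CY * ((1 + ‖latticeEmbed α - latticeEmbed β‖) ^ m)⁻¹ := by
  set C : ℝ := 1 + ‖latticeEmbed α - latticeEmbed β‖ with hC_def
  have hC0 : 0 < C := by positivity
  have key : ∀ γ, mnorm (X α γ * Y γ β) ≤ (CX * CY) * ((C ^ m)⁻¹ * F (α - γ)) := by
    intro γ
    have h1 : mnorm (X α γ * Y γ β) ≤ mnorm (X α γ) * mnorm (Y γ β) := mnorm_mul_le _ _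
    have h2 : mnorm (X α γ) * mnorm (Y γ β) ≤
        (CX * ((1 + ‖latticeEmbed α - latticeEmbed γ‖) ^ (m + d + 1))⁻¹) *
        (CY * ((1 + ‖latticeEmbed γ - latticeEmbed β‖) ^ (m + d + 1))⁻¹) :=
      mul_le_mul (hX α γ) (hY γ β) (mnorm_nonneg _) (by positivity)
    calc mnorm (X α γ * Y γ β)
        ≤ (CX * ((1 + ‖latticeEmbed α - latticeEmbed γ‖) ^ (m + d + 1))⁻¹) *
          (CY * ((1 + ‖latticeEmbed γ - latticeEmbed β‖) ^ (m + d + 1))⁻¹) := h1.trans h2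
      _ = (CX * CY) * (((1 + ‖latticeEmbed α - latticeEmbed γ‖) ^ (m + d + 1))⁻¹ *
          ((1 + ‖latticeEmbed γ - latticeEmbed β‖) ^ (m + d + 1))⁻¹) := by ring
      _ ≤ (CX * CY) * ((C ^ m)⁻¹ * F (α - γ)) :=
          mul_le_mul_of_nonneg_left (hFb α β γ) (by positivity)
  have hshift : Summable (fun γ : Fin d → ℤ => F (α - γ)) :=
    (Equiv.subLeft α).summable_iff.mpr hF
  have hW : Summable (fun γ : Fin d → ℤ => (CX * CY) * ((C ^ m)⁻¹ * F (α - γ))) := by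
    have := (hshift.mul_left ((CX * CY) * (C ^ m)⁻¹))
    apply this.congr
    intro γ
    ring
  have hsum : Summable (fun γ : Fin d → ℤ => mnorm (X α γ * Y γ β)) :=
    Summable.of_nonneg_of_le (fun γ => mnorm_nonneg _) key hW
  refine ⟨hsum, ?_⟩
  have hb1 : mnorm (∑' γ, X α γ * Y γ β) ≤ ∑' γ, mnorm (X α γ * Y γ β) :=
    mnorm_tsum_le _ hsum
  have hb2 : ∑' γ, mnorm (X α γ * Y γ β) ≤
      ∑' γ, (CX * CY) * ((C ^ m)⁻¹ * F (α - γ)) :=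
    Summable.tsum_le_tsum key hsum hW
  have hb3 : ∑' γ, (CX * CY) * ((C ^ m)⁻¹ * F (α - γ)) =
      (CX * CY) * ((C ^ m)⁻¹ * ∑' γ, F γ) := by
    rw [tsum_mul_left]
    congr 1
    rw [tsum_mul_left]
    congr 1
    exact (Equiv.subLeft α).tsum_eq F
  calc mnorm (∑' γ, X α γ * Y γ β) ≤ ∑' γ, (CX * CY) * ((C ^ m)⁻¹ * F (α - γ)) :=
        hb1.trans hb2
    _ = (CX * CY) * ((C ^ m)⁻¹ * ∑' γ, F γ) := hb3
    _ = (∑' γ, F γ) * CX * CY * (C ^ m)⁻¹ := by ring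

/-- Rapid off-diagonal decay of lattice matrices is stable under composition: if the
entries of `X` and `Y` decay at rate `(1+|α-β|)^{-(m+d+1)}`, then the entries of the
product `Z_{αβ} = Σ_γ X_{αγ} Y_{γβ}` (an absolutely convergent series) decay at rate
`(1+|α-β|)^{-m}`, with a constant depending only on `m` and `d`. -/
theorem matrix_convolution_decay (d : ℕ) (hd : 1 ≤ d) (m : ℕ) :
    ∃ K : ℝ, ∀ (N : ℕ), 1 ≤ N →
      ∀ (X Y : (Fin d → ℤ) → (Fin d → ℤ) → Matrix (Fin N) (Fin N) ℂ) (CX CY : ℝ),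
      (∀ α β, mnorm (X α β) ≤
        CX * ((1 + ‖latticeEmbed α - latticeEmbed β‖) ^ (m + d + 1))⁻¹) →
      (∀ α β, mnorm (Y α β) ≤
        CY * ((1 + ‖latticeEmbed α - latticeEmbed β‖) ^ (m + d + 1))⁻¹) →
      ∀ α β : Fin d → ℤ,
        Summable (fun γ : Fin d → ℤ => mnorm (X α γ * Y γ β)) ∧
        mnorm (∑' γ : Fin d → ℤ, X α γ * Y γ β) ≤
          K * CX * CY * ((1 + ‖latticeEmbed α - latticeEmbed β‖) ^ m)⁻¹ := by
  have hd0 : (0 : ℝ) < d := by exact_mod_cast hd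
  have hp1 : 1 < ((d : ℝ) + 1) / d := by
    rw [lt_div_iff₀ hd0]
    linarith
  have hg0 : ∀ n : ℤ, 0 ≤ ((1 + |(n : ℝ)|) ^ (((d : ℝ) + 1) / d))⁻¹ := fun n => by positivity
  have hF : Summable (fun γ : Fin d → ℤ =>
      ∏ i, ((1 + |(γ i : ℝ)|) ^ (((d : ℝ) + 1) / d))⁻¹) :=
    summable_pi_prod hg0 (summable_g hp1) d
  refine ⟨∑' γ : Fin d → ℤ, ∏ i, ((1 + |(γ i : ℝ)|) ^ (((d : ℝ) + 1) / d))⁻¹, ?_⟩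
  intro N hN X Y CX CY hX hY α β
  have hCX : 0 ≤ CX := by
    have h1 := hX α α
    have h0 := mnorm_nonneg (X α α)
    simp only [sub_self, norm_zero, add_zero, one_pow, inv_one, mul_one] at h1
    linarith
  have hCY : 0 ≤ CY := by
    have h1 := hY α α
    have h0 := mnorm_nonneg (Y α α)
    simp only [sub_self, norm_zero, add_zero, one_pow, inv_one, mul_one] at h1
    linarith
  exact main_aux d m N _ hF X Y CX CY hCX hCY hX hY (fun α β γ => key_bound d hd m α β γ) α β
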